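/- Let a ∈ ℂ. For every natural number s, setting n = s + 1, the class of (P·((s+1)²·X^s − a·s(2s+1)·X^(s−1) + s(s−1)·X^(s−2)), 0) in V = (L × L)/range(T) equals (((Q (n−1)).eval a − (Q (n+1)).eval a)/(2n+1)) times the class of (1, 0). That is, the cross-cocycle of the universal central extension of Der(A) satisfies ψ(e₁, f_s) = ((P_{n−1}(a) − P_{n+1}(a))/(2n+1))·ω₂ = (∫_a^1 P_n(t) dt)·ω₂. -/

import Mathlib

set_option maxRecDepth 4000


open LaurentPolynomial

/-- The linear map `T(f,g) = (p * D g + w * g, D f)` on `L × L`, encoding the distinguished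
derivation of the superelliptic algebra (even part `L`, odd part `L * u`), where `p = P`
and `w` is the odd-weight term `u * u' = P'/2`. -/
noncomputable def Tgen (p w : LaurentPolynomial ℂ)
    (D : LaurentPolynomial ℂ →ₗ[ℂ] LaurentPolynomial ℂ) :
    (LaurentPolynomial ℂ × LaurentPolynomial ℂ) →ₗ[ℂ]
      (LaurentPolynomial ℂ × LaurentPolynomial ℂ) where
  toFun fg := (p * D fg.2 + w * fg.2, D fg.1)
  map_add' x y := by
    ext
    · simp only [Prod.fst_add, Prod.snd_add, map_add]
      ring_nf
    · simp [Prod.snd_add]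
  map_smul' c x := by
    ext
    · simp only [Prod.smul_fst, Prod.smul_snd, map_smul, smul_add, mul_smul_comm,
        RingHom.id_apply]
    · simp

/-- The derivation map for the quadratic curve: `P = X^2 - 2aX + 1`, `P'/2 = X - a`. -/
noncomputable def Tquad (a : ℂ)
    (D : LaurentPolynomial ℂ →ₗ[ℂ] LaurentPolynomial ℂ) :
    (LaurentPolynomial ℂ × LaurentPolynomial ℂ) →ₗ[ℂ]
      (LaurentPolynomial ℂ × LaurentPolynomial ℂ) :=
  Tgen (T 2 - 2 * C a * T 1 + 1) (T 1 - C a) D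

lemma smul_eq_C_mul' (c : ℂ) (f : LaurentPolynomial ℂ) : c • f = C c * f := by
  rw [C_eq_algebraMap, ← Algebra.smul_def]

lemma T_shift (m : ℤ) (j : ℕ) : (T (m + j) : LaurentPolynomial ℂ) = T m * T 1 ^ j := by
  rw [T_pow, mul_one, T_add]

lemma rel (a : ℂ) (D : LaurentPolynomial ℂ →ₗ[ℂ] LaurentPolynomial ℂ)
    (hD : ∀ n : ℤ, D (T n) = (n : ℂ) • T (n - 1)) (m : ℤ) :
    (LinearMap.range (Tquad a D)).mkQ
      ((C ((m : ℂ) + 1) * T (m + 1) - C (a * (2 * (m : ℂ) + 1)) * T m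
        + C (m : ℂ) * T (m - 1), 0)) = 0 := by
  rw [Submodule.mkQ_apply, Submodule.Quotient.mk_eq_zero]
  refine ⟨(0, T m), ?_⟩
  show ((T 2 - 2 * C a * T 1 + 1) * D (T m) + (T 1 - C a) * T m, D 0) = _
  rw [hD m, map_zero]
  refine Prod.ext ?_ rfl
  show (T 2 - 2 * C a * T 1 + 1) * ((m:ℂ) • T (m-1)) + (T 1 - C a) * T m = _
  have e1 : m + 1 = (m - 1) + ((2:ℕ):ℤ) := by omega
  have e2 : m = (m - 1) + ((1:ℕ):ℤ) := by omega
  have e3 : (2:ℤ) = (0:ℤ) + ((2:ℕ):ℤ) := by omega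
  have h1 : (T (m+1) : LaurentPolynomial ℂ) = T (m-1) * T 1 ^ 2 := by
    rw [e1, T_shift]
  have h2 : (T m : LaurentPolynomial ℂ) = T (m-1) * T 1 := by
    conv_lhs => rw [e2]
    rw [T_shift, pow_one]
  have h3 : (T 2 : LaurentPolynomial ℂ) = T 1 ^ 2 := by
    rw [e3, T_shift, T_zero, one_mul]
  rw [smul_eq_C_mul', h1, h2, h3]
  simp only [map_add, map_mul, map_one, map_ofNat]
  ring

lemma keyT (a : ℂ) (D : LaurentPolynomial ℂ →ₗ[ℂ] LaurentPolynomial ℂ)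
    (hD : ∀ n : ℤ, D (T n) = (n : ℂ) • T (n - 1))
    (Q : ℕ → Polynomial ℂ) (hQ0 : Q 0 = 1) (hQ1 : Q 1 = Polynomial.X)
    (hQrec : ∀ n : ℕ, ((n : ℂ) + 2) • Q (n + 2) =
      (2 * (n : ℂ) + 3) • (Polynomial.X * Q (n + 1)) - ((n : ℂ) + 1) • Q n) :
    ∀ k : ℕ, (LinearMap.range (Tquad a D)).mkQ ((T (k : ℤ), 0)) =
      ((Q k).eval a) • (LinearMap.range (Tquad a D)).mkQ ((1, 0)) := by
  set mk := (LinearMap.range (Tquad a D)).mkQ with hmk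
  have base0 : mk ((T ((0:ℕ) : ℤ), 0)) = ((Q 0).eval a) • mk ((1, 0)) := by
    simp [hQ0, T_zero]
  have base1 : mk ((T ((1:ℕ) : ℤ), 0)) = ((Q 1).eval a) • mk ((1, 0)) := by
    have h := rel a D hD 0
    simp only [← hmk] at h
    have hsplit : ((C (((0:ℤ) : ℂ) + 1) * T (0 + 1) - C (a * (2 * ((0:ℤ) : ℂ) + 1)) * T 0
        + C ((0:ℤ) : ℂ) * T (0 - 1), 0) : LaurentPolynomial ℂ × LaurentPolynomial ℂ)
        = (T ((1:ℕ) : ℤ), 0) - a • ((1 : LaurentPolynomial ℂ), (0 : LaurentPolynomial ℂ)) := by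
      refine Prod.ext ?_ (by simp)
      show C (((0:ℤ) : ℂ) + 1) * T (0 + 1) - C (a * (2 * ((0:ℤ) : ℂ) + 1)) * T 0
        + C ((0:ℤ) : ℂ) * T (0 - 1) = T ((1:ℕ) : ℤ) - a • 1
      rw [smul_eq_C_mul', mul_one]
      push_cast
      rw [map_zero]
      norm_num [T_zero]
    rw [hsplit, map_sub, map_smul, sub_eq_zero] at h
    rw [h, hQ1, Polynomial.eval_X]
  have step : ∀ k : ℕ,
      mk ((T ((k:ℕ) : ℤ), 0)) = ((Q k).eval a) • mk ((1, 0)) →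
      mk ((T ((k+1 : ℕ) : ℤ), 0)) = ((Q (k+1)).eval a) • mk ((1, 0)) →
      mk ((T ((k+2 : ℕ) : ℤ), 0)) = ((Q (k+2)).eval a) • mk ((1, 0)) := by
    intro k ih0 ih1
    have h := rel a D hD ((k : ℤ) + 1)
    simp only [← hmk] at h
    have hsplit : ((C ((((k:ℤ)+1 : ℤ) : ℂ) + 1) * T ((k:ℤ) + 1 + 1)
          - C (a * (2 * (((k:ℤ)+1 : ℤ) : ℂ) + 1)) * T ((k:ℤ)+1)
          + C (((k:ℤ)+1 : ℤ) : ℂ) * T ((k:ℤ) + 1 - 1), 0) :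
          LaurentPolynomial ℂ × LaurentPolynomial ℂ)
        = (((k:ℂ)+2) • (T ((k+2:ℕ) : ℤ), 0) - (a * (2*(k:ℂ)+3)) • (T ((k+1:ℕ) : ℤ), 0)
          + ((k:ℂ)+1) • (T ((k:ℕ) : ℤ), (0 : LaurentPolynomial ℂ))) := by
      refine Prod.ext ?_ (by simp)
      show C ((((k:ℤ)+1 : ℤ) : ℂ) + 1) * T ((k:ℤ) + 1 + 1)
            - C (a * (2 * (((k:ℤ)+1 : ℤ) : ℂ) + 1)) * T ((k:ℤ)+1)
            + C (((k:ℤ)+1 : ℤ) : ℂ) * T ((k:ℤ) + 1 - 1)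
          = ((k:ℂ)+2) • T ((k+2:ℕ) : ℤ) - (a * (2*(k:ℂ)+3)) • T ((k+1:ℕ) : ℤ)
            + ((k:ℂ)+1) • T ((k:ℕ) : ℤ)
      rw [smul_eq_C_mul', smul_eq_C_mul', smul_eq_C_mul']
      have i1 : (k:ℤ) + 1 + 1 = ((k+2:ℕ) : ℤ) := by omega
      have i2 : (k:ℤ) + 1 = ((k+1:ℕ) : ℤ) := by omega
      have i3 : (k:ℤ) + 1 - 1 = ((k:ℕ) : ℤ) := by omega
      rw [i1, i3]
      rw [i2]
      push_cast
      ring_nf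
    rw [hsplit, map_add, map_sub, map_smul, map_smul, map_smul, ih0, ih1] at h
    -- h : X - Y + Z = 0 with X = (k+2)•A
    rw [sub_add_eq_add_sub, sub_eq_zero] at h
    have h5 : ((k:ℂ)+2) • mk ((T ((k+2:ℕ) : ℤ), 0))
        = (a * (2*(k:ℂ)+3)) • ((Q (k+1)).eval a • mk ((1,0)))
          - ((k:ℂ)+1) • ((Q k).eval a • mk ((1,0))) := eq_sub_of_add_eq h
    rw [smul_smul, smul_smul, ← sub_smul] at h5
    have hq := congrArg (Polynomial.eval a) (hQrec k)
    simp only [Polynomial.eval_smul, Polynomial.eval_sub, Polynomial.eval_mul,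
      Polynomial.eval_X, smul_eq_mul] at hq
    have hsc : a * (2*(k:ℂ)+3) * (Q (k+1)).eval a - ((k:ℂ)+1) * (Q k).eval a
        = ((k:ℂ)+2) * (Q (k+2)).eval a := by linear_combination -hq
    rw [hsc, mul_smul] at h5
    have hne : ((k:ℂ) + 2) ≠ 0 := by
      have : ((k:ℂ) + 2) = ((k + 2 : ℕ) : ℂ) := by push_cast; ring
      rw [this]
      exact Nat.cast_ne_zero.mpr (by omega)
    exact smul_right_injective _ hne h5
  intro k
  induction k using Nat.twoStepInduction with
  | zero => exact base0
  | one => exact base1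
  | more k ih1 ih2 => exact step k ih1 ih2

lemma expand (a : ℂ) (s : ℕ) :
    (T 2 - 2 * C a * T 1 + 1) *
      (C (((s : ℂ) + 1) ^ 2) * T (s : ℤ) -
        C (a * (s : ℂ) * (2 * (s : ℂ) + 1)) * T ((s : ℤ) - 1) +
        C ((s : ℂ) * ((s : ℂ) - 1)) * T ((s : ℤ) - 2)) =
    (((s:ℂ)+1)^2) • T ((s:ℤ)+2)
      - (a*(4*(s:ℂ)^2+5*(s:ℂ)+2)) • T ((s:ℤ)+1)
      + ((((s:ℂ)+1)^2 + (s:ℂ)*((s:ℂ)-1) + 2*a^2*(s:ℂ)*(2*(s:ℂ)+1))) • T (s:ℤ)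
      - (a*(s:ℂ)*(4*(s:ℂ)-1)) • T ((s:ℤ)-1)
      + ((s:ℂ)*((s:ℂ)-1)) • T ((s:ℤ)-2) := by
  have f4 : (T ((s:ℤ)+2) : LaurentPolynomial ℂ) = T ((s:ℤ)-2) * T 1 ^ 4 := by
    conv_lhs => rw [show (s:ℤ)+2 = ((s:ℤ)-2) + ((4:ℕ):ℤ) by omega]
    rw [T_shift]
  have f3 : (T ((s:ℤ)+1) : LaurentPolynomial ℂ) = T ((s:ℤ)-2) * T 1 ^ 3 := by
    conv_lhs => rw [show (s:ℤ)+1 = ((s:ℤ)-2) + ((3:ℕ):ℤ) by omega]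
    rw [T_shift]
  have f2 : (T ((s:ℤ)) : LaurentPolynomial ℂ) = T ((s:ℤ)-2) * T 1 ^ 2 := by
    conv_lhs => rw [show (s:ℤ) = ((s:ℤ)-2) + ((2:ℕ):ℤ) by omega]
    rw [T_shift]
  have f1 : (T ((s:ℤ)-1) : LaurentPolynomial ℂ) = T ((s:ℤ)-2) * T 1 := by
    conv_lhs => rw [show (s:ℤ)-1 = ((s:ℤ)-2) + ((1:ℕ):ℤ) by omega]
    rw [T_shift, pow_one]
  have fP : (T 2 : LaurentPolynomial ℂ) = T 1 ^ 2 := by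
    conv_lhs => rw [show (2:ℤ) = (0:ℤ) + ((2:ℕ):ℤ) by omega]
    rw [T_shift, T_zero, one_mul]
  rw [f4, f3, f2, f1, fP]
  rw [smul_eq_C_mul', smul_eq_C_mul', smul_eq_C_mul', smul_eq_C_mul', smul_eq_C_mul']
  simp only [map_mul, map_add, map_sub, map_pow, map_one, map_ofNat]
  ring

/-- the cross-cocycle `ψ(e₁, f_s) = [P * ∂²-part of x^s u]` equals the
Legendre antiderivative `(P_(n-1)(a) - P_(n+1)(a))/(2n+1)` times `ω₂`, where `n = s+1`. -/
theorem cross_cocycle_legendre_antiderivative (a : ℂ)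
    (D : LaurentPolynomial ℂ →ₗ[ℂ] LaurentPolynomial ℂ)
    (hD : ∀ n : ℤ, D (T n) = (n : ℂ) • T (n - 1))
    (Q : ℕ → Polynomial ℂ) (hQ0 : Q 0 = 1) (hQ1 : Q 1 = Polynomial.X)
    (hQrec : ∀ n : ℕ, ((n : ℂ) + 2) • Q (n + 2) =
      (2 * (n : ℂ) + 3) • (Polynomial.X * Q (n + 1)) - ((n : ℂ) + 1) • Q n)
    (s : ℕ) (n : ℕ) (hn : n = s + 1) :
    (LinearMap.range (Tquad a D)).mkQ
        ((T 2 - 2 * C a * T 1 + 1) *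
          (C (((s : ℂ) + 1) ^ 2) * T (s : ℤ) -
            C (a * (s : ℂ) * (2 * (s : ℂ) + 1)) * T ((s : ℤ) - 1) +
            C ((s : ℂ) * ((s : ℂ) - 1)) * T ((s : ℤ) - 2)), 0) =
      (((Q (n - 1)).eval a - (Q (n + 1)).eval a) / (2 * (n : ℂ) + 1)) •
        (LinearMap.range (Tquad a D)).mkQ (1, 0) := by
  subst hn
  have key := keyT a D hD Q hQ0 hQ1 hQrec
  have hpair : ((T 2 - 2 * C a * T 1 + 1) *
          (C (((s : ℂ) + 1) ^ 2) * T (s : ℤ) -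
            C (a * (s : ℂ) * (2 * (s : ℂ) + 1)) * T ((s : ℤ) - 1) +
            C ((s : ℂ) * ((s : ℂ) - 1)) * T ((s : ℤ) - 2)), (0 : LaurentPolynomial ℂ))
      = (((s:ℂ)+1)^2) • (T ((s:ℤ)+2), (0 : LaurentPolynomial ℂ))
        - (a*(4*(s:ℂ)^2+5*(s:ℂ)+2)) • (T ((s:ℤ)+1), 0)
        + ((((s:ℂ)+1)^2 + (s:ℂ)*((s:ℂ)-1) + 2*a^2*(s:ℂ)*(2*(s:ℂ)+1))) • (T (s:ℤ), 0)
        - (a*(s:ℂ)*(4*(s:ℂ)-1)) • (T ((s:ℤ)-1), 0)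
        + ((s:ℂ)*((s:ℂ)-1)) • (T ((s:ℤ)-2), 0) := by
    refine Prod.ext ?_ (by simp)
    simpa using expand a s
  rw [hpair, map_add, map_sub, map_add, map_sub, map_smul, map_smul, map_smul,
    map_smul, map_smul]
  rcases s with _ | _ | t
  · -- s = 0
    have k2 := key 2; have k1 := key 1; have k0 := key 0
    push_cast at k2 k1 k0 ⊢
    rw [k2, k1]
    have hq0 := congrArg (Polynomial.eval a) (hQrec 0)
    simp only [Polynomial.eval_smul, Polynomial.eval_sub, Polynomial.eval_mul,
      Polynomial.eval_X, smul_eq_mul] at hq0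
    norm_num at hq0 ⊢
    match_scalars
    have e0 : (Q 0).eval a = 1 := by rw [hQ0]; simp
    have e1 : (Q 1).eval a = a := by rw [hQ1]; simp
    field_simp
    linear_combination 2*hq0 - 3*e0
  · -- s = 1
    have k3 := key 3; have k2 := key 2; have k1 := key 1; have k0 := key 0
    push_cast at k3 k2 k1 k0 ⊢
    rw [k3, k2, k1, k0]
    have hq0 := congrArg (Polynomial.eval a) (hQrec 0)
    have hq1 := congrArg (Polynomial.eval a) (hQrec 1)
    simp only [Polynomial.eval_smul, Polynomial.eval_sub, Polynomial.eval_mul,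
      Polynomial.eval_X, smul_eq_mul] at hq0 hq1
    norm_num at hq0 hq1
    have e0 : (Q 0).eval a = 1 := by rw [hQ0]; simp
    have e1 : (Q 1).eval a = a := by rw [hQ1]; simp
    match_scalars
    · simp only [mul_one]
      rw [eq_div_iff (by norm_num : (2*2+1:ℂ) ≠ 0)]
      linear_combination (7:ℂ) * hq1 - 10*a*hq0 + 5*e1 - 5*a*e0
    · norm_num
  · -- s = t+2
    have i4 : ((t+1+1:ℕ):ℤ) + 2 = ((t+4:ℕ):ℤ) := by push_cast; ring
    have i3 : ((t+1+1:ℕ):ℤ) + 1 = ((t+3:ℕ):ℤ) := by push_cast; ring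
    have i1 : ((t+1+1:ℕ):ℤ) - 1 = ((t+1:ℕ):ℤ) := by push_cast; ring
    have i0 : ((t+1+1:ℕ):ℤ) - 2 = ((t:ℕ):ℤ) := by push_cast; ring
    have i2 : ((t+1+1:ℕ):ℤ) = ((t+2:ℕ):ℤ) := by push_cast; ring
    rw [i4, i3, i1, i0, i2]
    rw [key (t+4), key (t+3), key (t+2), key (t+1), key t]
    have hq0 := congrArg (Polynomial.eval a) (hQrec t)
    have hq1 := congrArg (Polynomial.eval a) (hQrec (t+1))
    have hq2 := congrArg (Polynomial.eval a) (hQrec (t+2))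
    simp only [show t+1+2 = t+3 by omega, show t+1+1 = t+2 by omega,
      show t+2+2 = t+4 by omega, show t+2+1 = t+3 by omega] at hq1 hq2
    simp only [Polynomial.eval_smul, Polynomial.eval_sub, Polynomial.eval_mul,
      Polynomial.eval_X, smul_eq_mul] at hq0 hq1 hq2
    norm_num at hq1 hq2 ⊢
    match_scalars
    simp only [show t+1+1+1+1 = t+4 by omega, show t+1+1 = t+2 by omega]
    have hne : 2 * ((t:ℂ)+1+1+1) + 1 ≠ 0 := by
      intro h
      have : ((2*t+7 : ℕ) : ℂ) = 0 := by push_cast; linear_combination h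
      exact (Nat.cast_ne_zero.mpr (by omega)) this
    simp only [mul_one]
    rw [eq_div_iff hne]
    linear_combination (2*(t:ℂ)^2+11*(t:ℂ)+16) * hq2
      - 2*((t:ℂ)+2)*(2*(t:ℂ)+7)*a * hq1 + ((t:ℂ)+2)*(2*(t:ℂ)+7) * hq0
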